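/- For every x ≥ 0, the function y ↦ k_J(x,y) is a probability density on [0,∞), i.e. ∫₀^∞ k_J(x,y) dy = 1, and its mean is ∫₀^∞ y · k_J(x,y) dy = x + ηJ/2. -/

import Mathlib

open MeasureTheory Set


private lemma tsum_exp_div (t : ℝ) : ∑' n : ℕ, t ^ n / (n.factorial : ℝ) = Real.exp t := by
  rw [Real.exp_eq_exp_ℝ, NormedSpace.exp_eq_tsum_div]

private lemma summable_n_mul (t : ℝ) :
    Summable (fun n : ℕ => (n : ℝ) * t ^ n / (n.factorial : ℝ)) := by
  rw [← summable_nat_add_iff 1]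
  refine ((Real.summable_pow_div_factorial t).mul_left t).congr fun n => ?_
  rw [Nat.factorial_succ]
  have hn : ((n:ℝ) + 1) ≠ 0 := by positivity
  push_cast
  field_simp
  ring

private lemma tsum_n_mul (t : ℝ) :
    ∑' n : ℕ, (n : ℝ) * t ^ n / (n.factorial : ℝ) = t * Real.exp t := by
  rw [Summable.tsum_eq_zero_add (summable_n_mul t)]
  have h0 : ((0:ℕ) : ℝ) * t ^ (0:ℕ) / ((0:ℕ).factorial : ℝ) = 0 := by simp
  rw [h0, zero_add]
  have : ∀ n : ℕ, ((n+1 : ℕ) : ℝ) * t ^ (n+1) / ((n+1).factorial : ℝ) = t * (t ^ n / (n.factorial : ℝ)) := by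
    intro n
    rw [Nat.factorial_succ]
    have hn : ((n:ℝ) + 1) ≠ 0 := by positivity
    push_cast
    field_simp
    ring
  rw [tsum_congr this, tsum_mul_left, tsum_exp_div]

private lemma ratio_eq (η J : ℝ) (hJ : 0 < J) (n : ℕ) :
    (2:ℝ) ^ (2*(n:ℝ)+η-1) / J ^ (2*(n:ℝ)+η-1) * ((J/2) ^ ((n:ℝ)+η)) = (2/J)^n * (J/2) := by
  have h2J : (0:ℝ) < 2/J := by positivity
  rw [← Real.div_rpow (by norm_num : (0:ℝ) ≤ 2) hJ.le]
  rw [← inv_div (2:ℝ) J]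
  rw [Real.inv_rpow h2J.le, ← Real.rpow_neg h2J.le, ← Real.rpow_add h2J]
  rw [show 2*(n:ℝ)+η-1 + -((n:ℝ)+η) = (n:ℝ) + -1 by ring]
  rw [Real.rpow_add h2J, Real.rpow_natCast, Real.rpow_neg_one]

private lemma prod_eq (η J x : ℝ) (hη : 1 < η) (hJ : 0 < J) (n : ℕ) :
    (2 / J) * Real.exp (-(2*x/J)) *
        ((2:ℝ) ^ (2*(n:ℝ)+η-1) * x ^ n / (J ^ (2*(n:ℝ)+η-1) * (n.factorial:ℝ) * Real.Gamma ((n:ℝ)+η))) *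
        ((J/2) ^ ((n:ℝ)+η) * Real.Gamma ((n:ℝ)+η))
      = Real.exp (-(2*x/J)) * (2*x/J) ^ n / (n.factorial:ℝ) := by
  have hη0 : (0:ℝ) < η := lt_trans one_pos hη
  have hB : (0:ℝ) < (n:ℝ) + η := by positivity
  have hΓ : Real.Gamma ((n:ℝ)+η) ≠ 0 := (Real.Gamma_pos_of_pos hB).ne'
  have hJA : J ^ (2*(n:ℝ)+η-1) ≠ 0 := (Real.rpow_pos_of_pos hJ _).ne'
  have hfac : (n.factorial:ℝ) ≠ 0 := Nat.cast_ne_zero.mpr n.factorial_ne_zero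
  have h1 : (2 / J) * Real.exp (-(2*x/J)) *
        ((2:ℝ) ^ (2*(n:ℝ)+η-1) * x ^ n / (J ^ (2*(n:ℝ)+η-1) * (n.factorial:ℝ) * Real.Gamma ((n:ℝ)+η))) *
        ((J/2) ^ ((n:ℝ)+η) * Real.Gamma ((n:ℝ)+η))
      = Real.exp (-(2*x/J)) * x ^ n / (n.factorial:ℝ) *
        ((2/J) * ((2:ℝ) ^ (2*(n:ℝ)+η-1) / J ^ (2*(n:ℝ)+η-1) * ((J/2) ^ ((n:ℝ)+η)))) := by
    field_simp
  rw [h1, ratio_eq η J hJ n]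
  have h2 : (2/J) * ((2/J:ℝ)^n * (J/2)) = (2/J)^n := by
    field_simp
  rw [h2, show (2*x/J:ℝ) = 2/J*x by ring, mul_pow]
  ring

private lemma besselTerm_integral (η J x : ℝ) (hη : 1 < η) (hJ : 0 < J) (hx : 0 ≤ x) (n : ℕ) :
    (∫ y in Ioi (0:ℝ),
      (2 / J) * Real.exp (-(2*x/J)) *
        ((2:ℝ) ^ (2*(n:ℝ)+η-1) * x ^ n / (J ^ (2*(n:ℝ)+η-1) * (n.factorial:ℝ) * Real.Gamma ((n:ℝ)+η))) *
        (y ^ ((n:ℝ)+η-1) * Real.exp (-(2/J * y))))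
      = Real.exp (-(2*x/J)) * (2*x/J) ^ n / (n.factorial:ℝ) := by
  have hη0 : (0:ℝ) < η := lt_trans one_pos hη
  have hB : (0:ℝ) < (n:ℝ) + η := by positivity
  rw [integral_const_mul, Real.integral_rpow_mul_exp_neg_mul_Ioi hB (by positivity), one_div_div]
  exact prod_eq η J x hη hJ n

private lemma besselTerm_integral_mul (η J x : ℝ) (hη : 1 < η) (hJ : 0 < J) (hx : 0 ≤ x) (n : ℕ) :
    (∫ y in Ioi (0:ℝ),
      y * ((2 / J) * Real.exp (-(2*x/J)) *
        ((2:ℝ) ^ (2*(n:ℝ)+η-1) * x ^ n / (J ^ (2*(n:ℝ)+η-1) * (n.factorial:ℝ) * Real.Gamma ((n:ℝ)+η))) *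
        (y ^ ((n:ℝ)+η-1) * Real.exp (-(2/J * y)))))
      = Real.exp (-(2*x/J)) * (2*x/J) ^ n / (n.factorial:ℝ) * (((n:ℝ)+η) * (J/2)) := by
  have hη0 : (0:ℝ) < η := lt_trans one_pos hη
  have hB : (0:ℝ) < (n:ℝ) + η := by positivity
  have hstep : ∀ y ∈ Ioi (0:ℝ),
      y * ((2 / J) * Real.exp (-(2*x/J)) *
        ((2:ℝ) ^ (2*(n:ℝ)+η-1) * x ^ n / (J ^ (2*(n:ℝ)+η-1) * (n.factorial:ℝ) * Real.Gamma ((n:ℝ)+η))) *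
        (y ^ ((n:ℝ)+η-1) * Real.exp (-(2/J * y))))
      = (2 / J) * Real.exp (-(2*x/J)) *
        ((2:ℝ) ^ (2*(n:ℝ)+η-1) * x ^ n / (J ^ (2*(n:ℝ)+η-1) * (n.factorial:ℝ) * Real.Gamma ((n:ℝ)+η))) *
        (y ^ ((n:ℝ)+η+1-1) * Real.exp (-(2/J * y))) := by
    intro y hy
    have hy' : (0:ℝ) < y := hy
    rw [show ((n:ℝ)+η+1-1 : ℝ) = ((n:ℝ)+η-1) + 1 by ring, Real.rpow_add hy', Real.rpow_one]
    ring
  rw [setIntegral_congr_fun measurableSet_Ioi hstep, integral_const_mul,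
    Real.integral_rpow_mul_exp_neg_mul_Ioi (by positivity : (0:ℝ) < (n:ℝ)+η+1) (by positivity),
    one_div_div, Real.Gamma_add_one hB.ne', Real.rpow_add_one (by positivity : (J/2:ℝ) ≠ 0)]
  calc (2 / J) * Real.exp (-(2*x/J)) *
        ((2:ℝ) ^ (2*(n:ℝ)+η-1) * x ^ n / (J ^ (2*(n:ℝ)+η-1) * (n.factorial:ℝ) * Real.Gamma ((n:ℝ)+η))) *
        ((J/2) ^ ((n:ℝ)+η) * (J/2) * (((n:ℝ)+η) * Real.Gamma ((n:ℝ)+η)))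
      = ((2 / J) * Real.exp (-(2*x/J)) *
        ((2:ℝ) ^ (2*(n:ℝ)+η-1) * x ^ n / (J ^ (2*(n:ℝ)+η-1) * (n.factorial:ℝ) * Real.Gamma ((n:ℝ)+η))) *
        ((J/2) ^ ((n:ℝ)+η) * Real.Gamma ((n:ℝ)+η))) * (((n:ℝ)+η) * (J/2)) := by ring
    _ = Real.exp (-(2*x/J)) * (2*x/J) ^ n / (n.factorial:ℝ) * (((n:ℝ)+η) * (J/2)) := by
        rw [prod_eq η J x hη hJ n]

/-- The transition kernel
`k_J(x,y) = (2/J) e^{−2(x+y)/J} Σ_{n≥0} 2^{2n+η−1} xⁿ y^{n+η−1} / (J^{2n+η−1} n! Γ(n+η))`,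
which for `x > 0` equals `(2/J) (y/x)^{(η−1)/2} e^{−2(x+y)/J} I_{η−1}(4√(xy)/J)`. -/
noncomputable def besselKernel (η J x y : ℝ) : ℝ :=
  (2 / J) * Real.exp (-2 * (x + y) / J) *
    ∑' n : ℕ, (2:ℝ) ^ (2 * (n:ℝ) + η - 1) * x ^ n * y ^ ((n:ℝ) + η - 1) /
      (J ^ (2 * (n:ℝ) + η - 1) * (n.factorial : ℝ) * Real.Gamma ((n:ℝ) + η))

/-- For every `x ≥ 0`, `y ↦ k_J(x,y)` is a probability density on `[0,∞)` with mean
`x + ηJ/2`. -/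
theorem besselKernel_integral_one_and_mean
    (η J : ℝ) (hη : 1 < η) (hJ : 0 < J) (x : ℝ) (hx : 0 ≤ x) :
    (∫ y in Set.Ici (0:ℝ), besselKernel η J x y) = 1 ∧
    (∫ y in Set.Ici (0:ℝ), y * besselKernel η J x y) = x + η * J / 2 := by
  have hη0 : (0:ℝ) < η := lt_trans one_pos hη
  set F : ℕ → ℝ → ℝ := fun n y =>
    (2 / J) * Real.exp (-(2*x/J)) *
        ((2:ℝ) ^ (2*(n:ℝ)+η-1) * x ^ n / (J ^ (2*(n:ℝ)+η-1) * (n.factorial:ℝ) * Real.Gamma ((n:ℝ)+η))) *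
        (y ^ ((n:ℝ)+η-1) * Real.exp (-(2/J * y))) with hF
  have hker : ∀ y : ℝ, besselKernel η J x y = ∑' n, F n y := by
    intro y
    rw [besselKernel, ← tsum_mul_left]
    refine tsum_congr fun n => ?_
    rw [hF, show (-2*(x+y)/J : ℝ) = -(2*x/J) + -(2/J*y) by ring, Real.exp_add]
    ring
  -- integrability
  have hIntOn : ∀ s : ℝ, 0 < s →
      IntegrableOn (fun y : ℝ => y ^ (s-1) * Real.exp (-(2/J * y))) (Ioi 0) := by
    intro s hs
    have h := integrableOn_rpow_mul_exp_neg_mul_rpow (s := s-1) (p := 1) (b := 2/J)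
      (by linarith) one_pos (by positivity)
    refine h.congr_fun (fun y hy => ?_) measurableSet_Ioi
    beta_reduce; rw [Real.rpow_one, neg_mul]
  have hIntF : ∀ n : ℕ, IntegrableOn (F n) (Ioi 0) := by
    intro n
    have hB : (0:ℝ) < (n:ℝ) + η := by positivity
    exact (hIntOn ((n:ℝ)+η) hB).const_mul _
  have hFnonneg : ∀ n : ℕ, ∀ y ∈ Ioi (0:ℝ), 0 ≤ F n y := by
    intro n y hy
    have hy' : (0:ℝ) < y := hy
    rw [hF]
    positivity
  have hval : ∀ n : ℕ, (∫ y in Ioi (0:ℝ), F n y)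
      = Real.exp (-(2*x/J)) * (2*x/J) ^ n / (n.factorial:ℝ) := fun n =>
    besselTerm_integral η J x hη hJ hx n
  have hnorm : ∀ n : ℕ, (∫ y in Ioi (0:ℝ), ‖F n y‖) = ∫ y in Ioi (0:ℝ), F n y := fun n =>
    setIntegral_congr_fun measurableSet_Ioi fun y hy => Real.norm_of_nonneg (hFnonneg n y hy)
  have hsummable : Summable (fun n : ℕ => Real.exp (-(2*x/J)) * (2*x/J) ^ n / (n.factorial:ℝ)) := by
    refine ((Real.summable_pow_div_factorial (2*x/J)).mul_left (Real.exp (-(2*x/J)))).congr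
      fun n => by ring
  have hee : Real.exp (-(2*x/J)) * Real.exp (2*x/J) = 1 := by
    rw [← Real.exp_add]; simp
  constructor
  · rw [integral_Ici_eq_integral_Ioi,
      setIntegral_congr_fun measurableSet_Ioi (fun y (_ : y ∈ Ioi (0:ℝ)) => hker y),
      ← integral_tsum_of_summable_integral_norm hIntF
        (hsummable.congr fun n => ((hnorm n).trans (hval n)).symm),
      tsum_congr hval]
    rw [tsum_congr (fun n : ℕ => mul_div_assoc (Real.exp (-(2*x/J))) ((2*x/J) ^ n) (n.factorial:ℝ)),
      tsum_mul_left, tsum_exp_div, hee]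
  · have hker2 : ∀ y : ℝ, y * besselKernel η J x y = ∑' n, y * F n y := fun y => by
      rw [hker y, ← tsum_mul_left]
    have hIntF2 : ∀ n : ℕ, IntegrableOn (fun y => y * F n y) (Ioi 0) := by
      intro n
      have hB : (0:ℝ) < (n:ℝ) + η + 1 := by positivity
      have h : IntegrableOn (fun y : ℝ =>
          ((2 / J) * Real.exp (-(2*x/J)) *
          ((2:ℝ) ^ (2*(n:ℝ)+η-1) * x ^ n / (J ^ (2*(n:ℝ)+η-1) * (n.factorial:ℝ) * Real.Gamma ((n:ℝ)+η)))) *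
          (y ^ ((n:ℝ)+η+1-1) * Real.exp (-(2/J * y)))) (Ioi 0) :=
        (hIntOn ((n:ℝ)+η+1) hB).const_mul _
      refine h.congr_fun (fun y hy => ?_) measurableSet_Ioi
      have hy' : (0:ℝ) < y := hy
      rw [hF]; beta_reduce; rw [show ((n:ℝ)+η+1-1 : ℝ) = ((n:ℝ)+η-1) + 1 by ring, Real.rpow_add hy', Real.rpow_one]
      ring
    have hval2 : ∀ n : ℕ, (∫ y in Ioi (0:ℝ), y * F n y)
        = Real.exp (-(2*x/J)) * (2*x/J) ^ n / (n.factorial:ℝ) * (((n:ℝ)+η) * (J/2)) := fun n =>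
      besselTerm_integral_mul η J x hη hJ hx n
    have hFnonneg2 : ∀ n : ℕ, ∀ y ∈ Ioi (0:ℝ), 0 ≤ y * F n y := fun n y hy =>
      mul_nonneg (le_of_lt hy) (hFnonneg n y hy)
    have hnorm2 : ∀ n : ℕ, (∫ y in Ioi (0:ℝ), ‖y * F n y‖) = ∫ y in Ioi (0:ℝ), y * F n y := fun n =>
      setIntegral_congr_fun measurableSet_Ioi fun y hy => Real.norm_of_nonneg (hFnonneg2 n y hy)
    have hsummable2 : Summable (fun n : ℕ =>
        Real.exp (-(2*x/J)) * (2*x/J) ^ n / (n.factorial:ℝ) * (((n:ℝ)+η) * (J/2))) := by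
      have h1 := (summable_n_mul (2*x/J)).mul_left (Real.exp (-(2*x/J)) * (J/2))
      have h2 := (Real.summable_pow_div_factorial (2*x/J)).mul_left
        (Real.exp (-(2*x/J)) * (η * (J/2)))
      refine (h1.add h2).congr fun n => ?_
      field_simp
    rw [integral_Ici_eq_integral_Ioi,
      setIntegral_congr_fun measurableSet_Ioi (fun y (_ : y ∈ Ioi (0:ℝ)) => hker2 y),
      ← integral_tsum_of_summable_integral_norm hIntF2
        (hsummable2.congr fun n => ((hnorm2 n).trans (hval2 n)).symm),
      tsum_congr hval2]
    have split : ∀ n : ℕ,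
        Real.exp (-(2*x/J)) * (2*x/J) ^ n / (n.factorial:ℝ) * (((n:ℝ)+η) * (J/2))
        = (Real.exp (-(2*x/J)) * (J/2)) * ((n:ℝ) * (2*x/J) ^ n / (n.factorial:ℝ))
          + (Real.exp (-(2*x/J)) * (η * (J/2))) * ((2*x/J) ^ n / (n.factorial:ℝ)) := by
      intro n; field_simp
    rw [tsum_congr split,
      Summable.tsum_add ((summable_n_mul (2*x/J)).mul_left _)
        ((Real.summable_pow_div_factorial (2*x/J)).mul_left _),
      tsum_mul_left, tsum_mul_left, tsum_n_mul, tsum_exp_div]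
    rw [show Real.exp (-(2*x/J)) * (J/2) * (2*x/J * Real.exp (2*x/J))
        + Real.exp (-(2*x/J)) * (η * (J/2)) * Real.exp (2*x/J)
        = (J/2 * (2*x/J) + η * (J/2)) * (Real.exp (-(2*x/J)) * Real.exp (2*x/J)) by ring,
      hee, mul_one]
    field_simp
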